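/- arXiv:0711.0596 — 3 statements merged into one kernel-verified Lean document; each statement's English description precedes it below -/
import Mathlib

section
/- Let K be a field, let n ≥ 2, and let w₁, w₂, w₃, w₄ ∈ (Fin n →₀ ℕ) be nonzero words satisfying the independence hypothesis and conditions (a)–(d) of the two-relator normality criterion (so that K[S] is a normal domain), where S is the quotient of (Fin n →₀ ℕ) by the additive congruence generated by (w₁, w₂) and (w₃, w₄) with quotient map π. Suppose i ∈ supp(w₁) and j ∈ supp(w₂) are indices such that i ∉ supp(w₃) ∪ supp(w₄) and j ∉ supp(w₃) ∪ supp(w₄). Then the ideal Q of K[S] = AddMonoidAlgebra K S generated by the two monomials X^{π(e_i)} and X^{π(e_j)} is a prime ideal. -/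
/-- The support of a word in the free abelian monoid `Fin n →₀ ℕ`. -/
def supp {n : ℕ} (w : Fin n →₀ ℕ) : Set (Fin n) := {i | w i ≠ 0}

/-- `Hsupp w` is the set of generators occurring in `w` with exponent at least `2`;
`w` is square free iff `Hsupp w = ∅`. -/
def Hsupp {n : ℕ} (w : Fin n →₀ ℕ) : Set (Fin n) := {i | 2 ≤ w i}

/-- The supports of two words intersect nontrivially. -/
def Overlap {n : ℕ} (v w : Fin n →₀ ℕ) : Prop := supp v ∩ supp w ≠ ∅

/-- The two relations `w₁ = w₂` and `w₃ = w₄` are independent: neither is a consequence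
of the additive congruence generated by the other alone. -/
def IndependentRels {n : ℕ} (w₁ w₂ w₃ w₄ : Fin n →₀ ℕ) : Prop :=
  ¬ (addConGen fun x y => x = w₃ ∧ y = w₄) w₁ w₂ ∧
  ¬ (addConGen fun x y => x = w₁ ∧ y = w₂) w₃ w₄

/-- Condition (d) of the two-relator normality criterion, with
`O = {(i,j) : i ∈ {1,2}, j ∈ {3,4}, supp(wᵢ) ∩ supp(w_j) ≠ ∅}`:
either `O = ∅`; or `O` is a singleton `{(i,j)}` and `Hsupp(w_{i'}) = ∅` or
`Hsupp(w_{j'}) = ∅` for the complementary indices `i', j'`; or `O` consists of exactly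
two pairs sharing a common coordinate and the unique index `m` occurring in no pair of
`O` satisfies `Hsupp(w_m) = ∅`. -/
def CondD {n : ℕ} (w₁ w₂ w₃ w₄ : Fin n →₀ ℕ) : Prop :=
  -- O = ∅
  (¬ Overlap w₁ w₃ ∧ ¬ Overlap w₁ w₄ ∧ ¬ Overlap w₂ w₃ ∧ ¬ Overlap w₂ w₄) ∨
  -- O = {(i,j)} a singleton
  (Overlap w₁ w₃ ∧ ¬ Overlap w₁ w₄ ∧ ¬ Overlap w₂ w₃ ∧ ¬ Overlap w₂ w₄ ∧
    (Hsupp w₂ = ∅ ∨ Hsupp w₄ = ∅)) ∨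
  (¬ Overlap w₁ w₃ ∧ Overlap w₁ w₄ ∧ ¬ Overlap w₂ w₃ ∧ ¬ Overlap w₂ w₄ ∧
    (Hsupp w₂ = ∅ ∨ Hsupp w₃ = ∅)) ∨
  (¬ Overlap w₁ w₃ ∧ ¬ Overlap w₁ w₄ ∧ Overlap w₂ w₃ ∧ ¬ Overlap w₂ w₄ ∧
    (Hsupp w₁ = ∅ ∨ Hsupp w₄ = ∅)) ∨
  (¬ Overlap w₁ w₃ ∧ ¬ Overlap w₁ w₄ ∧ ¬ Overlap w₂ w₃ ∧ Overlap w₂ w₄ ∧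
    (Hsupp w₁ = ∅ ∨ Hsupp w₃ = ∅)) ∨
  -- O consists of exactly two pairs sharing a common coordinate
  (Overlap w₁ w₃ ∧ Overlap w₁ w₄ ∧ ¬ Overlap w₂ w₃ ∧ ¬ Overlap w₂ w₄ ∧ Hsupp w₂ = ∅) ∨
  (¬ Overlap w₁ w₃ ∧ ¬ Overlap w₁ w₄ ∧ Overlap w₂ w₃ ∧ Overlap w₂ w₄ ∧ Hsupp w₁ = ∅) ∨
  (Overlap w₁ w₃ ∧ ¬ Overlap w₁ w₄ ∧ Overlap w₂ w₃ ∧ ¬ Overlap w₂ w₄ ∧ Hsupp w₄ = ∅) ∨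
  (¬ Overlap w₁ w₃ ∧ Overlap w₁ w₄ ∧ ¬ Overlap w₂ w₃ ∧ Overlap w₂ w₄ ∧ Hsupp w₃ = ∅)

open Finsupp AddMonoidAlgebra

section Aux
variable {n : ℕ} {K : Type*} [Field K]

noncomputable def gfun (P : (Fin n →₀ ℕ) → Prop) (F : (Fin n →₀ ℕ) →+ (Fin n → ℤ))
    (K : Type*) [Field K] (v : Fin n →₀ ℕ) : AddMonoidAlgebra K (Fin n → ℤ) :=
  open Classical in
  if P v then AddMonoidAlgebra.single (F v) 1 else 0

variable {c : AddCon (Fin n →₀ ℕ)} {P : (Fin n →₀ ℕ) → Prop} {F : (Fin n →₀ ℕ) →+ (Fin n → ℤ)}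

theorem gfun_wd (hinv : ∀ v v', c v v' → ((P v ↔ P v') ∧ (P v → F v = F v')))
    (a b : Fin n →₀ ℕ) (h : c a b) : gfun P F K a = gfun P F K b := by
  classical
  obtain ⟨h1, h2⟩ := hinv a b h
  by_cases hp : P a
  · simp [gfun, hp, h1.mp hp, h2 hp]
  · rw [gfun, gfun, if_neg hp, if_neg (fun hb => hp (h1.mpr hb))]

noncomputable def Ghom (hP0 : P 0) (hPadd : ∀ v w, P (v + w) ↔ (P v ∧ P w))
    (hinv : ∀ v v', c v v' → ((P v ↔ P v') ∧ (P v → F v = F v'))) :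
    Multiplicative c.Quotient →* AddMonoidAlgebra K (Fin n → ℤ) where
  toFun := fun s => AddCon.liftOn s.toAdd (gfun P F K) (gfun_wd hinv)
  map_one' := by
    classical
    show AddCon.liftOn (0 : c.Quotient) _ _ = 1
    have : (0 : c.Quotient) = c.mk' 0 := rfl
    rw [this]
    show gfun P F K 0 = 1
    simp [gfun, hP0, AddMonoidAlgebra.one_def]
  map_mul' := fun x y => by
    classical
    obtain ⟨a, ha⟩ := AddCon.mk'_surjective (Multiplicative.toAdd x)
    obtain ⟨b, hb⟩ := AddCon.mk'_surjective (Multiplicative.toAdd y)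
    show AddCon.liftOn (Multiplicative.toAdd (x*y)) _ _ = AddCon.liftOn (Multiplicative.toAdd x) _ _ * AddCon.liftOn (Multiplicative.toAdd y) _ _
    have hxy : Multiplicative.toAdd (x * y) = Multiplicative.toAdd x + Multiplicative.toAdd y := rfl
    rw [hxy, ← ha, ← hb, ← map_add]
    show gfun P F K (a + b) = gfun P F K a * gfun P F K b
    by_cases hpa : P a <;> by_cases hpb : P b <;>
      simp [gfun, hPadd, hpa, hpb, AddMonoidAlgebra.single_mul_single]
end Aux

section Aux2
variable {n : ℕ} {K : Type*} [Field K]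
variable {c : AddCon (Fin n →₀ ℕ)} {P : (Fin n →₀ ℕ) → Prop} {F : (Fin n →₀ ℕ) →+ (Fin n → ℤ)}

theorem aux_isPrime (hP0 : P 0) (hPadd : ∀ v w, P (v + w) ↔ (P v ∧ P w))
    (hinv : ∀ v v', c v v' → ((P v ↔ P v') ∧ (P v → F v = F v')))
    (hinj : ∀ v v', P v → P v' → F v = F v' → c v v')
    (i j : Fin n) (hPi : ¬ P (Finsupp.single i 1)) (hPj : ¬ P (Finsupp.single j 1))
    (hbad : ∀ v : Fin n →₀ ℕ, ¬ P v →
      (∃ u, v = Finsupp.single i 1 + u) ∨ (∃ u, v = Finsupp.single j 1 + u)) :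
    (Ideal.span
      {AddMonoidAlgebra.of' K c.Quotient (c.mk' (Finsupp.single i 1)),
       AddMonoidAlgebra.of' K c.Quotient (c.mk' (Finsupp.single j 1))}).IsPrime := by
  classical
  haveI : IsDomain (AddMonoidAlgebra K (Fin n → ℤ)) := NoZeroDivisors.to_isDomain _
  set Φ := (AddMonoidAlgebra.lift K (AddMonoidAlgebra K (Fin n → ℤ)) c.Quotient)
      (Ghom hP0 hPadd hinv) with hΦ
  set I := Ideal.span {AddMonoidAlgebra.of' K c.Quotient (c.mk' (Finsupp.single i 1)),
       AddMonoidAlgebra.of' K c.Quotient (c.mk' (Finsupp.single j 1))} with hI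
  have hlift : ∀ s : c.Quotient,
      AddCon.liftOn s (gfun P F K) (gfun_wd hinv) = gfun P F K (Quotient.out s) := by
    intro s
    conv_lhs => rw [← Quotient.out_eq s]
    rfl
  have hGq : ∀ s : c.Quotient, ∀ k : K,
      Φ (AddMonoidAlgebra.single s k) = k • gfun P F K (Quotient.out s) := by
    intro s k
    rw [hΦ, AddMonoidAlgebra.lift_single]
    congr 1
    exact hlift s
  have hmk : ∀ v : Fin n →₀ ℕ, ∀ k : K,
      Φ (AddMonoidAlgebra.single (c.mk' v) k) = k • gfun P F K v := by
    intro v k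
    rw [hGq]
    congr 1
    refine gfun_wd hinv _ _ ?_
    rw [← AddCon.eq]
    show (Quotient.mk _ (Quotient.out (c.mk' v)) : c.Quotient) = c.mk' v
    exact Quotient.out_eq _
  have hsub : I ≤ RingHom.ker Φ := by
    rw [hI, Ideal.span_le]
    rintro x hx
    simp only [Set.mem_insert_iff, Set.mem_singleton_iff] at hx
    rcases hx with rfl | rfl <;>
      · simp only [SetLike.mem_coe, RingHom.mem_ker, AddMonoidAlgebra.of'_apply]
        rw [hmk]
        simp [gfun, hPi, hPj]
  have hker : RingHom.ker Φ ≤ I := by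
    intro x hx
    rw [RingHom.mem_ker] at hx
    set xb := AddMonoidAlgebra.ofCoeff (x.coeff.filter (fun s : c.Quotient => ¬ P (Quotient.out s))) with hxb
    set xg := AddMonoidAlgebra.ofCoeff (x.coeff.filter (fun s : c.Quotient => P (Quotient.out s))) with hxg
    have hsum : xg + xb = x := by
      rw [hxg, hxb, ← AddMonoidAlgebra.ofCoeff_add, Finsupp.filter_pos_add_filter_neg]
    have hxbI : xb ∈ I := by
      rw [← AddMonoidAlgebra.sum_coeff_single xb]
      refine Submodule.sum_mem I ?_
      intro s hs
      have hsP : ¬ P (Quotient.out s) := by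
        by_contra h
        refine Finsupp.mem_support_iff.mp hs ?_
        rw [hxb]
        exact Finsupp.filter_apply_neg _ _ (by simpa using h)
      have hout : c.mk' (Quotient.out s) = s := by
        show (Quotient.mk _ (Quotient.out s) : c.Quotient) = s
        exact Quotient.out_eq _
      rcases hbad _ hsP with ⟨u, hu⟩ | ⟨u, hu⟩
      · have hseq : c.mk' u + c.mk' (Finsupp.single i 1) = s := by
          rw [← map_add, add_comm, ← hu, hout]
        have heq : (AddMonoidAlgebra.single s (xb.coeff s) : AddMonoidAlgebra K c.Quotient)
            = AddMonoidAlgebra.single (c.mk' u) (xb.coeff s)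
              * AddMonoidAlgebra.of' K c.Quotient (c.mk' (Finsupp.single i 1)) := by
          rw [AddMonoidAlgebra.of'_apply, AddMonoidAlgebra.single_mul_single, mul_one, hseq]
        rw [heq]
        exact Ideal.mul_mem_left _ _ (Ideal.subset_span (Set.mem_insert _ _))
      · have hseq : c.mk' u + c.mk' (Finsupp.single j 1) = s := by
          rw [← map_add, add_comm, ← hu, hout]
        have heq : (AddMonoidAlgebra.single s (xb.coeff s) : AddMonoidAlgebra K c.Quotient)
            = AddMonoidAlgebra.single (c.mk' u) (xb.coeff s)
              * AddMonoidAlgebra.of' K c.Quotient (c.mk' (Finsupp.single j 1)) := by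
          rw [AddMonoidAlgebra.of'_apply, AddMonoidAlgebra.single_mul_single, mul_one, hseq]
        rw [heq]
        exact Ideal.mul_mem_left _ _
          (Ideal.subset_span (Set.mem_insert_of_mem _ rfl))
    have hΦxb : Φ xb = 0 := hsub hxbI
    have hΦxg : Φ xg = 0 := by
      have h2 : Φ (xg + xb) = 0 := by rw [hsum]; exact hx
      rw [map_add, hΦxb, add_zero] at h2
      exact h2
    have hrep : Φ xg = AddMonoidAlgebra.ofCoeff (Finsupp.mapDomain (fun s : c.Quotient => F (Quotient.out s)) xg.coeff) := by
      rw [hΦ, AddMonoidAlgebra.lift_apply, Finsupp.mapDomain, AddMonoidAlgebra.ofCoeff_finsuppSum]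
      refine Finsupp.sum_congr ?_
      intro s hs
      have hsP : P (Quotient.out s) := by
        by_contra h
        refine Finsupp.mem_support_iff.mp hs ?_
        rw [hxg]
        exact Finsupp.filter_apply_neg _ _ h
      show (xg.coeff s) • AddCon.liftOn s (gfun P F K) (gfun_wd hinv) = _
      rw [hlift, gfun, if_pos hsP, AddMonoidAlgebra.smul_single', mul_one]; rfl
    have hxg0 : xg = 0 := by
      have hFinj : Set.InjOn (fun s : c.Quotient => F (Quotient.out s))
          {s : c.Quotient | P (Quotient.out s)} := by
        intro s hs t ht hst
        have hcc := hinj _ _ hs ht hst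
        rw [← Quotient.out_eq s, ← Quotient.out_eq t]
        exact Quotient.sound hcc
      have hinjOn := Finsupp.mapDomain_injOn (M := K)
          {s : c.Quotient | P (Quotient.out s)} hFinj
      rw [← AddMonoidAlgebra.coeff_eq_zero]
      refine hinjOn ?_ ?_ ?_
      · intro s hs
        simp only [Finset.mem_coe] at hs
        by_contra h
        refine Finsupp.mem_support_iff.mp hs ?_
        rw [hxg]
        exact Finsupp.filter_apply_neg _ _ h
      · intro s hs; simp at hs
      · rw [Finsupp.mapDomain_zero, ← AddMonoidAlgebra.ofCoeff_eq_zero, ← hrep, hΦxg]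
    have hxxb : x = xb := by rw [← hsum, hxg0, zero_add]
    rw [hxxb]
    exact hxbI
  have hIker : I = RingHom.ker Φ := le_antisymm hsub hker
  rw [hIker]
  exact RingHom.ker_isPrime Φ
end Aux2


section Test
variable {n : ℕ} (ws wt : Fin n →₀ ℕ) (j₀ : Fin n)

noncomputable def Fm : (Fin n →₀ ℕ) →+ (Fin n → ℤ) :=
  AddMonoidHom.mk' (fun v a => (v a : ℤ) + (v j₀ : ℤ) * ((wt a : ℤ) - (ws a : ℤ)))
    (by intro v w; funext a; simp [Finsupp.add_apply]; push_cast; ring)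

theorem Fm_apply (v : Fin n →₀ ℕ) (a : Fin n) :
    Fm ws wt j₀ v a = (v a : ℤ) + (v j₀ : ℤ) * ((wt a : ℤ) - (ws a : ℤ)) := rfl

theorem Fm_inj {c : AddCon (Fin n →₀ ℕ)} (hcwts : c wt ws)
    (hdisj2 : ∀ a, ws a = 0 ∨ wt a = 0)
    (v v' : Fin n →₀ ℕ) (hle : v j₀ ≤ v' j₀) (hF : Fm ws wt j₀ v = Fm ws wt j₀ v') :
    c v v' := by
  set k : ℕ := v' j₀ - v j₀ with hk
  have hkz : (k : ℤ) = (v' j₀ : ℤ) - (v j₀ : ℤ) := by rw [hk]; push_cast [hle]; ring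
  have key : ∀ a, v a + k * ws a = v' a + k * wt a := by
    intro a
    have h := congrFun hF a
    rw [Fm_apply, Fm_apply] at h
    have hz : ((v a + k * ws a : ℕ) : ℤ) = ((v' a + k * wt a : ℕ) : ℤ) := by
      push_cast
      rw [hkz]
      linear_combination h
    exact_mod_cast hz
  have hwle : ∀ a, k * wt a ≤ v a := by
    intro a
    rcases hdisj2 a with hws | hwt
    · have h := key a
      rw [hws, mul_zero, add_zero] at h
      exact h ▸ Nat.le_add_left _ _
    · simp [hwt]
  set m : Fin n →₀ ℕ := v - k • wt with hm
  have hv : v = m + k • wt := by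
    ext a
    rw [Finsupp.add_apply, hm, Finsupp.tsub_apply, Finsupp.smul_apply, smul_eq_mul]
    have h1 := hwle a
    set t := k * wt a with ht
    omega
  have hv' : v' = m + k • ws := by
    ext a
    rw [Finsupp.add_apply, hm, Finsupp.tsub_apply, Finsupp.smul_apply, Finsupp.smul_apply,
      smul_eq_mul, smul_eq_mul]
    have h1 := hwle a
    have h2 := key a
    set t := k * wt a with ht
    set u := k * ws a with hu
    omega
  have hNsmul : ∀ N : ℕ, c (N • wt) (N • ws) := by
    intro N
    induction N with
    | zero => simpa using c.refl 0
    | succ N ih => rw [succ_nsmul, succ_nsmul]; exact c.add ih hcwts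
  rw [hv, hv']
  exact c.add (c.refl m) (hNsmul k)
end Test

theorem stmt10 (K : Type*) [Field K] (n : ℕ) (hn : 2 ≤ n)
    (w₁ w₂ w₃ w₄ : Fin n →₀ ℕ)
    (h₁ : w₁ ≠ 0) (h₂ : w₂ ≠ 0) (h₃ : w₃ ≠ 0) (h₄ : w₄ ≠ 0)
    (hind : IndependentRels w₁ w₂ w₃ w₄)
    (ha : supp w₁ ∩ supp w₂ = ∅ ∧ supp w₃ ∩ supp w₄ = ∅)
    (hb : Hsupp w₁ = ∅ ∨ Hsupp w₂ = ∅)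
    (hcnd : Hsupp w₃ = ∅ ∨ Hsupp w₄ = ∅)
    (hd : CondD w₁ w₂ w₃ w₄)
    (c : AddCon (Fin n →₀ ℕ))
    (hc : c = addConGen (fun x y => (x = w₁ ∧ y = w₂) ∨ (x = w₃ ∧ y = w₄)))
    (i j : Fin n) (hi : i ∈ supp w₁) (hj : j ∈ supp w₂)
    (hi' : i ∉ supp w₃ ∪ supp w₄) (hj' : j ∉ supp w₃ ∪ supp w₄) :
    (Ideal.span
      {AddMonoidAlgebra.of' K c.Quotient (c.mk' (Finsupp.single i 1)),
       AddMonoidAlgebra.of' K c.Quotient (c.mk' (Finsupp.single j 1))}).IsPrime := by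

  classical
  -- unpack basic support facts
  have hw1i : w₁ i ≠ 0 := hi
  have hw2j : w₂ j ≠ 0 := hj
  have h3i : w₃ i = 0 := by by_contra h; exact hi' (Or.inl h)
  have h4i : w₄ i = 0 := by by_contra h; exact hi' (Or.inr h)
  have h3j : w₃ j = 0 := by by_contra h; exact hj' (Or.inl h)
  have h4j : w₄ j = 0 := by by_contra h; exact hj' (Or.inr h)
  have hdisj : ∀ a, w₃ a = 0 ∨ w₄ a = 0 := by
    intro a
    by_contra hcon
    push_neg at hcon
    have : a ∈ supp w₃ ∩ supp w₄ := ⟨hcon.1, hcon.2⟩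
    rw [ha.2] at this
    exact this
  obtain ⟨ws, wt, j₀, hpair, hws1, hwt0⟩ :
      ∃ (ws wt : Fin n →₀ ℕ) (j₀ : Fin n),
        ((ws = w₃ ∧ wt = w₄) ∨ (ws = w₄ ∧ wt = w₃)) ∧ ws j₀ = 1 ∧ wt j₀ = 0 := by
    rcases hcnd with h | h
    · obtain ⟨a, haa⟩ := Finsupp.ne_iff.mp h₃
      rw [Finsupp.coe_zero, Pi.zero_apply] at haa
      have h1 : w₃ a = 1 := by
        have h2 : ¬ 2 ≤ w₃ a := fun h2 => by
          have : a ∈ Hsupp w₃ := h2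
          rw [h] at this
          exact this
        omega
      exact ⟨w₃, w₄, a, Or.inl ⟨rfl, rfl⟩, h1, (hdisj a).resolve_left (by simp [h1])⟩
    · obtain ⟨a, haa⟩ := Finsupp.ne_iff.mp h₄
      rw [Finsupp.coe_zero, Pi.zero_apply] at haa
      have h1 : w₄ a = 1 := by
        have h2 : ¬ 2 ≤ w₄ a := fun h2 => by
          have : a ∈ Hsupp w₄ := h2
          rw [h] at this
          exact this
        omega
      exact ⟨w₄, w₃, a, Or.inr ⟨rfl, rfl⟩, h1, (hdisj a).resolve_right (by simp [h1])⟩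
  have hdisj2 : ∀ a, ws a = 0 ∨ wt a = 0 := by
    rcases hpair with ⟨hws, hwt⟩ | ⟨hws, hwt⟩ <;> subst hws <;> subst hwt
    · exact hdisj
    · exact fun a => (hdisj a).symm
  set P : (Fin n →₀ ℕ) → Prop := fun v => v i = 0 ∧ v j = 0 with hP
  set F : (Fin n →₀ ℕ) →+ (Fin n → ℤ) := Fm ws wt j₀ with hFdef
  have hP0 : P 0 := ⟨rfl, rfl⟩
  have hPadd : ∀ v w, P (v + w) ↔ (P v ∧ P w) := by
    intro v w
    simp only [hP, Finsupp.add_apply, Nat.add_eq_zero]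
    tauto
  -- the relations and the congruence
  have hc34 : c w₃ w₄ := by
    rw [hc]
    exact AddConGen.Rel.of _ _ (Or.inr ⟨rfl, rfl⟩)
  have hcwts : c wt ws := by
    rcases hpair with ⟨hws, hwt⟩ | ⟨hws, hwt⟩ <;> subst hws <;> subst hwt
    · exact c.symm hc34
    · exact hc34
  -- invariance
  have hnP1 : ¬ P w₁ := fun hp => hw1i hp.1
  have hnP2 : ¬ P w₂ := fun hp => hw2j hp.2
  have hP3 : P w₃ := ⟨h3i, h3j⟩
  have hP4 : P w₄ := ⟨h4i, h4j⟩
  have hF34 : F w₃ = F w₄ := by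
    funext a
    rw [hFdef, Fm_apply, Fm_apply]
    rcases hpair with ⟨hws, hwt⟩ | ⟨hws, hwt⟩ <;> subst hws <;> subst hwt <;>
      rw [hws1, hwt0] <;> push_cast <;> ring
  have hinv : ∀ v v', c v v' → ((P v ↔ P v') ∧ (P v → F v = F v')) := by
    intro v v' hvv'
    let D : AddCon (Fin n →₀ ℕ) :=
      { r := fun a b => (P a ↔ P b) ∧ (P a → F a = F b)
        iseqv := ⟨fun a => ⟨Iff.rfl, fun _ => rfl⟩,
          fun {a b} h => ⟨h.1.symm, fun hp => (h.2 (h.1.mpr hp)).symm⟩,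
          fun {a b d} h h' => ⟨h.1.trans h'.1, fun hp => (h.2 hp).trans (h'.2 (h.1.mp hp))⟩⟩
        add' := fun {a b a' b'} h h' => by
          constructor
          · rw [hPadd, hPadd]
            exact and_congr h.1 h'.1
          · intro hp
            obtain ⟨p1, p2⟩ := (hPadd _ _).mp hp
            rw [map_add, map_add, h.2 p1, h'.2 p2] }
    have hle : addConGen (fun x y => (x = w₁ ∧ y = w₂) ∨ (x = w₃ ∧ y = w₄)) ≤ D := by
      apply AddCon.addConGen_le.mpr
      rintro x y (⟨rfl, rfl⟩ | ⟨rfl, rfl⟩)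
      · exact ⟨iff_of_false hnP1 hnP2, fun hp => absurd hp hnP1⟩
      · exact ⟨iff_of_true hP3 hP4, fun _ => hF34⟩
    rw [hc] at hvv'
    exact hle hvv'
  -- injectivity
  have hinj : ∀ v v', P v → P v' → F v = F v' → c v v' := by
    intro v v' _ _ hF
    rcases le_total (v j₀) (v' j₀) with h | h
    · exact Fm_inj ws wt j₀ hcwts hdisj2 v v' h hF
    · exact c.symm (Fm_inj ws wt j₀ hcwts hdisj2 v' v h hF.symm)
  have hPi : ¬ P (Finsupp.single i 1) := fun hp => by
    have := hp.1
    rw [Finsupp.single_eq_same] at this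
    exact one_ne_zero this
  have hPj : ¬ P (Finsupp.single j 1) := fun hp => by
    have := hp.2
    rw [Finsupp.single_eq_same] at this
    exact one_ne_zero this
  have hbad : ∀ v : Fin n →₀ ℕ, ¬ P v →
      (∃ u, v = Finsupp.single i 1 + u) ∨ (∃ u, v = Finsupp.single j 1 + u) := by
    intro v hv
    rw [hP, not_and_or] at hv
    rcases hv with hvi | hvj
    · left
      refine ⟨v - Finsupp.single i 1, ?_⟩
      ext a
      rw [Finsupp.add_apply, Finsupp.tsub_apply]
      by_cases hia : i = a
      · subst hia
        rw [Finsupp.single_eq_same]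
        omega
      · rw [Finsupp.single_eq_of_ne' hia]
        omega
    · right
      refine ⟨v - Finsupp.single j 1, ?_⟩
      ext a
      rw [Finsupp.add_apply, Finsupp.tsub_apply]
      by_cases hja : j = a
      · subst hja
        rw [Finsupp.single_eq_same]
        omega
      · rw [Finsupp.single_eq_of_ne' hja]
        omega
  exact aux_isPrime hP0 hPadd hinv hinj i j hPi hPj hbad
end

section
/- Let n ≥ 2 and let w₁, w₂, w₃, w₄ ∈ (Fin n →₀ ℕ) be nonzero words satisfying the independence hypothesis and conditions (a)–(d) of the two-relator normality criterion, and assume in addition that Hsupp(w₁) = ∅, Hsupp(w₃) = ∅, that supp(w₁) ∩ supp(w_l) = ∅ for every l ∈ {2,3,4}, and that |supp(w_k)| > 1 for k = 1,2,3,4. Let S be the quotient of (Fin n →₀ ℕ) by the additive congruence generated by (w₁, w₂) and (w₃, w₄), with quotient map π. Then for every s ∈ S there exist u ∈ supp(w₁), v ∈ supp(w₃) and a word x ∈ (Fin n →₀ ℕ) with x(u) = 0, x(v) = 0 and π(x) = s; that is, S is the union of the images of the submonoids generated by the generators other than u and v, as (u,v) ranges over supp(w₁) × supp(w₃). -/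
/-- Reduction lemma: repeatedly applying a square-free relation `a → b` (with
disjoint supports) kills some coordinate in the support of `a`. -/
lemma reduce_aux {n : ℕ} (c : AddCon (Fin n →₀ ℕ)) (a b : Fin n →₀ ℕ)
    (hab : c a b) (ha0 : a ≠ 0) (hsq : ∀ i, a i ≤ 1)
    (hdisj : ∀ i, a i ≠ 0 → b i = 0) :
    ∀ y : Fin n →₀ ℕ, ∃ z, c z y ∧ (∃ u, a u ≠ 0 ∧ z u = 0) ∧
      ∀ i, a i = 0 → b i = 0 → z i = y i := by
  obtain ⟨u₀, hu₀⟩ : ∃ u, a u ≠ 0 := by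
    by_contra h
    push_neg at h
    exact ha0 (Finsupp.ext fun i => h i)
  have key : ∀ N : ℕ, ∀ y : Fin n →₀ ℕ, (∑ i ∈ a.support, y i) ≤ N →
      ∃ z, c z y ∧ (∃ u, a u ≠ 0 ∧ z u = 0) ∧
        ∀ i, a i = 0 → b i = 0 → z i = y i := by
    intro N
    induction N with
    | zero =>
      intro y hy
      refine ⟨y, c.refl y, ⟨u₀, hu₀, ?_⟩, fun i _ _ => rfl⟩
      have hmem : u₀ ∈ a.support := Finsupp.mem_support_iff.mpr hu₀
      have := Finset.sum_le_sum_of_subset (Finset.singleton_subset_iff.mpr hmem)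
        (f := fun i => y i)
      simp only [Finset.sum_singleton] at this
      omega
    | succ N ih =>
      intro y hy
      by_cases hcase : ∃ u, a u ≠ 0 ∧ y u = 0
      · exact ⟨y, c.refl y, hcase, fun i _ _ => rfl⟩
      · push_neg at hcase
        have hle : a ≤ y := by
          intro i
          by_cases hi : a i = 0
          · simp [hi]
          · have := hsq i
            have := hcase i hi
            omega
        set z₀ : Fin n →₀ ℕ := (y - a) + b with hz₀
        have hzy : c z₀ y := by
          have h1 : c ((y - a) + b) ((y - a) + a) := c.add (c.refl (y - a)) (c.symm hab)
          have h2 : (y - a) + a = y := tsub_add_cancel_of_le hle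
          rwa [h2] at h1
        have hz₀app : ∀ i, z₀ i = y i - a i + b i := by
          intro i
          simp [hz₀, Finsupp.add_apply, Finsupp.tsub_apply]
        have hsum : (∑ i ∈ a.support, z₀ i) ≤ N := by
          have hsum1 : (∑ i ∈ a.support, z₀ i) = ∑ i ∈ a.support, (y i - a i) := by
            apply Finset.sum_congr rfl
            intro i hi
            rw [hz₀app i, hdisj i (Finsupp.mem_support_iff.mp hi)]
            omega
          have hsum2 : (∑ i ∈ a.support, (y i - a i)) + (∑ i ∈ a.support, a i)
              = ∑ i ∈ a.support, y i := by
            rw [← Finset.sum_add_distrib]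
            apply Finset.sum_congr rfl
            intro i _
            have := hle i
            omega
          have hpos : 1 ≤ ∑ i ∈ a.support, a i := by
            have hmem : u₀ ∈ a.support := Finsupp.mem_support_iff.mpr hu₀
            have := Finset.sum_le_sum_of_subset (Finset.singleton_subset_iff.mpr hmem)
              (f := fun i => a i)
            simp only [Finset.sum_singleton] at this
            omega
          omega
        obtain ⟨z, hz1, hz2, hz3⟩ := ih z₀ hsum
        refine ⟨z, c.trans hz1 hzy, hz2, ?_⟩
        intro i hia hib
        rw [hz3 i hia hib, hz₀app i, hia, hib]
        omega
  intro y
  exact key (∑ i ∈ a.support, y i) y le_rfl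

theorem stmt11 (n : ℕ) (hn : 2 ≤ n)
    (w₁ w₂ w₃ w₄ : Fin n →₀ ℕ)
    (h₁ : w₁ ≠ 0) (h₂ : w₂ ≠ 0) (h₃ : w₃ ≠ 0) (h₄ : w₄ ≠ 0)
    (hind : IndependentRels w₁ w₂ w₃ w₄)
    (ha : supp w₁ ∩ supp w₂ = ∅ ∧ supp w₃ ∩ supp w₄ = ∅)
    (hb : Hsupp w₁ = ∅ ∨ Hsupp w₂ = ∅)
    (hcnd : Hsupp w₃ = ∅ ∨ Hsupp w₄ = ∅)
    (hd : CondD w₁ w₂ w₃ w₄)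
    (hsf₁ : Hsupp w₁ = ∅) (hsf₃ : Hsupp w₃ = ∅)
    (hdisj₂ : supp w₁ ∩ supp w₂ = ∅)
    (hdisj₃ : supp w₁ ∩ supp w₃ = ∅)
    (hdisj₄ : supp w₁ ∩ supp w₄ = ∅)
    (hbig : 1 < (supp w₁).ncard ∧ 1 < (supp w₂).ncard ∧
      1 < (supp w₃).ncard ∧ 1 < (supp w₄).ncard)
    (c : AddCon (Fin n →₀ ℕ))
    (hc : c = addConGen (fun x y => (x = w₁ ∧ y = w₂) ∨ (x = w₃ ∧ y = w₄))) :
    ∀ s : c.Quotient, ∃ u ∈ supp w₁, ∃ v ∈ supp w₃, ∃ x : Fin n →₀ ℕ,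
      x u = 0 ∧ x v = 0 ∧ c.mk' x = s := by
  intro s
  obtain ⟨y, rfl⟩ := AddCon.mk'_surjective s
  have hrel₁ : c w₁ w₂ := by
    rw [hc]; exact AddConGen.Rel.of _ _ (Or.inl ⟨rfl, rfl⟩)
  have hrel₃ : c w₃ w₄ := by
    rw [hc]; exact AddConGen.Rel.of _ _ (Or.inr ⟨rfl, rfl⟩)
  have hsq₁ : ∀ i, w₁ i ≤ 1 := by
    intro i
    by_contra h
    exact (Set.eq_empty_iff_forall_notMem.mp hsf₁ i) (by simp [Hsupp]; omega)
  have hsq₃ : ∀ i, w₃ i ≤ 1 := by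
    intro i
    by_contra h
    exact (Set.eq_empty_iff_forall_notMem.mp hsf₃ i) (by simp [Hsupp]; omega)
  have hd₁₂ : ∀ i, w₁ i ≠ 0 → w₂ i = 0 := by
    intro i hi
    by_contra h
    exact (Set.eq_empty_iff_forall_notMem.mp hdisj₂ i) ⟨hi, h⟩
  have hd₃₄ : ∀ i, w₃ i ≠ 0 → w₄ i = 0 := by
    intro i hi
    by_contra h
    exact (Set.eq_empty_iff_forall_notMem.mp ha.2 i) ⟨hi, h⟩
  obtain ⟨z₁, hz₁y, ⟨u, hu, hz₁u⟩, _⟩ := reduce_aux c w₁ w₂ hrel₁ h₁ hsq₁ hd₁₂ y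
  obtain ⟨z₂, hz₂z₁, ⟨v, hv, hz₂v⟩, hz₂fix⟩ := reduce_aux c w₃ w₄ hrel₃ h₃ hsq₃ hd₃₄ z₁
  have hw₃u : w₃ u = 0 := by
    by_contra h
    exact (Set.eq_empty_iff_forall_notMem.mp hdisj₃ u) ⟨hu, h⟩
  have hw₄u : w₄ u = 0 := by
    by_contra h
    exact (Set.eq_empty_iff_forall_notMem.mp hdisj₄ u) ⟨hu, h⟩
  refine ⟨u, hu, v, hv, z₂, ?_, hz₂v, ?_⟩
  · rw [hz₂fix u hw₃u hw₄u]; exact hz₁u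
  · exact (AddCon.eq c).mpr (c.trans hz₂z₁ hz₁y)
end

section
/- Let K be a field and let S be the presented commutative monoid ⟨u₁, u₂, u₃, u₄ | u₁u₂ = u₃², u₁u₃ = u₄²⟩, i.e. the quotient of (Fin 4 →₀ ℕ) by the additive congruence generated by the two pairs (e₁ + e₂, 2·e₃) and (e₁ + e₃, 2·e₄). Then the semigroup algebra K[S] = AddMonoidAlgebra K S is an integral domain but is NOT integrally closed (K[S] is a domain that is not normal). -/
open Finsupp

namespace Stmt13Aux

noncomputable def X (a b c d : ℕ) : Fin 4 →₀ ℕ :=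
  single 0 a + single 1 b + single 2 c + single 3 d

def fm : (Fin 4 →₀ ℕ) →+ ℤ × ℤ where
  toFun x := ((x 0 : ℤ) - 3 * x 1 - x 2, 4 * (x 1 : ℤ) + 2 * x 2 + x 3)
  map_zero' := by simp
  map_add' x y := by
    simp only [Finsupp.add_apply, Prod.mk_add_mk, Prod.mk.injEq]
    push_cast
    constructor <;> ring

@[simp] lemma fm_apply (x : Fin 4 →₀ ℕ) :
    fm x = (((x 0 : ℤ) - 3 * x 1 - x 2), (4 * (x 1 : ℤ) + 2 * x 2 + x 3)) := rfl

lemma X_apply (a b c d : ℕ) :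
    (X a b c d) 0 = a ∧ (X a b c d) 1 = b ∧ (X a b c d) 2 = c ∧ (X a b c d) 3 = d := by
  refine ⟨?_, ?_, ?_, ?_⟩ <;> simp [X, Finsupp.single_apply]

@[simp] lemma fm_X (a b c d : ℕ) :
    fm (X a b c d) = (((a : ℤ) - 3 * b - c), (4 * (b : ℤ) + 2 * c + d)) := by
  obtain ⟨h0, h1, h2, h3⟩ := X_apply a b c d
  rw [fm_apply, h0, h1, h2, h3]

lemma decomp (x : Fin 4 →₀ ℕ) : x = X (x 0) (x 1) (x 2) (x 3) := by
  ext i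
  fin_cases i <;> simp [X, Finsupp.single_apply]

lemma X_add (a b c d a' b' c' d' : ℕ) :
    X a b c d + X a' b' c' d' = X (a + a') (b + b') (c + c') (d + d') := by
  simp only [X, Finsupp.single_add]
  abel

def rel : (Fin 4 →₀ ℕ) → (Fin 4 →₀ ℕ) → Prop := fun x y =>
  (x = Finsupp.single (0 : Fin 4) 1 + Finsupp.single 1 1 ∧
    y = Finsupp.single (2 : Fin 4) 2) ∨
  (x = Finsupp.single (0 : Fin 4) 1 + Finsupp.single 2 1 ∧
    y = Finsupp.single (3 : Fin 4) 2)

noncomputable def C : AddCon (Fin 4 →₀ ℕ) := addConGen rel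

lemma rel1 : C (X 1 1 0 0) (X 0 0 2 0) := by
  apply AddConGen.Rel.of
  left
  constructor <;> simp [X]

lemma rel2 : C (X 1 0 1 0) (X 0 0 0 2) := by
  apply AddConGen.Rel.of
  right
  constructor <;> simp [X]

lemma step1 (a b c d : ℕ) : C (X (a+1) (b+1) c d) (X a b (c+2) d) := by
  have := C.add rel1 (C.refl (X a b c d))
  rw [X_add, X_add] at this
  simpa [Nat.add_comm] using this

lemma step2 (a b c d : ℕ) : C (X (a+1) b (c+1) d) (X a b c (d+2)) := by
  have := C.add rel2 (C.refl (X a b c d))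
  rw [X_add, X_add] at this
  simpa [Nat.add_comm] using this

lemma step3 (a b c d : ℕ) : C (X a b (c+3) d) (X a (b+1) c (d+2)) :=
  C.trans (C.symm (step1 a b (c+1) d)) (step2 a (b+1) c d)

noncomputable def nfz (p : ℤ × ℤ) : Fin 4 →₀ ℕ :=
  if 0 ≤ p.1 then X p.1.toNat 0 0 p.2.toNat
  else X 0 ((-p.1)/3).toNat ((-p.1)%3).toNat (p.2 - 4*((-p.1)/3) - 2*((-p.1)%3)).toNat

lemma nfz_pos (a d : ℕ) : nfz ((a : ℤ), (d : ℤ)) = X a 0 0 d := by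
  simp [nfz]

lemma nfz_neg (b c d : ℕ) (hc : c < 3) (hne : 0 < 3*b + c) :
    nfz (-(3*(b:ℤ)+c), 4*b+2*c+d) = X 0 b c d := by
  rw [nfz, if_neg (by push_cast; omega)]
  have h1 : ((-(-(3*(b:ℤ)+c)))/3).toNat = b := by omega
  have h2 : ((-(-(3*(b:ℤ)+c)))%3).toNat = c := by omega
  have h3 : ((4*(b:ℤ)+2*c+d) - 4*((-(-(3*(b:ℤ)+c)))/3) - 2*((-(-(3*(b:ℤ)+c)))%3)).toNat = d := by
    omega
  rw [h1, h2, h3]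

lemma key_terminal (a b c d : ℕ) (h : (b = 0 ∧ c = 0) ∨ (a = 0 ∧ c < 3)) :
    nfz (fm (X a b c d)) = X a b c d := by
  by_cases hbc : b = 0 ∧ c = 0
  · obtain ⟨rfl, rfl⟩ := hbc
    rw [fm_X]
    have he : ((a:ℤ) - 3 * (0:ℕ) - (0:ℕ), 4 * ((0:ℕ):ℤ) + 2 * (0:ℕ) + d) = ((a:ℤ), (d:ℤ)) := by
      rw [Prod.ext_iff]
      constructor <;> dsimp only <;> push_cast <;> omega
    rw [he, nfz_pos]
  · obtain ⟨rfl, hc⟩ : a = 0 ∧ c < 3 := by tauto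
    rw [fm_X]
    have he : (((0:ℕ):ℤ) - 3 * b - c, 4 * ((b:ℕ):ℤ) + 2 * c + d)
        = (-(3*(b:ℤ)+c), 4*(b:ℤ)+2*c+d) := by
      rw [Prod.ext_iff]
      constructor <;> dsimp only <;> push_cast <;> omega
    rw [he, nfz_neg b c d hc (by omega)]

lemma key : ∀ n a b c d, 2*a+3*b+2*c+d ≤ n → C (X a b c d) (nfz (fm (X a b c d))) := by
  intro n
  induction n with
  | zero =>
    intro a b c d h
    obtain ⟨rfl, rfl, rfl, rfl⟩ : a = 0 ∧ b = 0 ∧ c = 0 ∧ d = 0 := by omega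
    rw [key_terminal 0 0 0 0 (by omega)]
    exact C.refl _
  | succ n ih =>
    intro a b c d h
    by_cases hc3 : 3 ≤ c
    · obtain ⟨c', rfl⟩ : ∃ c', c = c' + 3 := ⟨c - 3, by omega⟩
      have hrec := ih a (b+1) c' (d+2) (by omega)
      have hfm : fm (X a (b+1) c' (d+2)) = fm (X a b (c'+3) d) := by
        rw [fm_X, fm_X, Prod.ext_iff]
        push_cast
        constructor <;> (push_cast; try ring_nf) <;> omega
      rw [hfm] at hrec
      exact C.trans (step3 a b c' d) hrec
    · by_cases hab : 1 ≤ a ∧ 1 ≤ b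
      · obtain ⟨a', rfl⟩ : ∃ a', a = a' + 1 := ⟨a - 1, by omega⟩
        obtain ⟨b', rfl⟩ : ∃ b', b = b' + 1 := ⟨b - 1, by omega⟩
        have hrec := ih a' b' (c+2) d (by omega)
        have hfm : fm (X a' b' (c+2) d) = fm (X (a'+1) (b'+1) c d) := by
          rw [fm_X, fm_X, Prod.ext_iff]
          push_cast
          constructor <;> (push_cast; try ring_nf) <;> omega
        rw [hfm] at hrec
        exact C.trans (step1 a' b' c d) hrec
      · by_cases hac : 1 ≤ a ∧ 1 ≤ c
        · obtain ⟨a', rfl⟩ : ∃ a', a = a' + 1 := ⟨a - 1, by omega⟩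
          obtain ⟨c', rfl⟩ : ∃ c', c = c' + 1 := ⟨c - 1, by omega⟩
          have hrec := ih a' b c' (d+2) (by omega)
          have hfm : fm (X a' b c' (d+2)) = fm (X (a'+1) b (c'+1) d) := by
            rw [fm_X, fm_X, Prod.ext_iff]
            push_cast
            constructor <;> (push_cast; try ring_nf) <;> omega
          rw [hfm] at hrec
          exact C.trans (step2 a' b c' d) hrec
        · rw [key_terminal a b c d (by omega)]
          exact C.refl _

lemma key_all (x : Fin 4 →₀ ℕ) : C x (nfz (fm x)) := by
  have := key (2 * x 0 + 3 * x 1 + 2 * x 2 + x 3) (x 0) (x 1) (x 2) (x 3) le_rfl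
  rwa [← decomp x] at this

lemma fm_inj {x y : Fin 4 →₀ ℕ} (h : fm x = fm y) : C x y := by
  have h1 := key_all x
  rw [h] at h1
  exact C.trans h1 (C.symm (key_all y))

lemma cle : C ≤ AddCon.ker fm := by
  apply AddCon.addConGen_le.mpr
  rintro x y (⟨rfl, rfl⟩ | ⟨rfl, rfl⟩) <;>
    · rw [AddCon.ker_rel, fm_apply, fm_apply]
      simp [Finsupp.single_apply]

noncomputable def phi : C.Quotient →+ ℤ × ℤ := C.lift fm cle

lemma phi_coe (x : Fin 4 →₀ ℕ) : phi (x : C.Quotient) = fm x := AddCon.lift_coe cle x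

lemma phi_inj : Function.Injective phi := by
  intro u v h
  induction u using AddCon.induction_on with
  | _ x =>
  induction v using AddCon.induction_on with
  | _ y =>
  rw [phi_coe, phi_coe] at h
  exact (C.eq).mpr (fm_inj h)

end Stmt13Aux

namespace Stmt13Aux

lemma fm_ne (x : Fin 4 →₀ ℕ) : fm x ≠ ((-2 : ℤ), (3 : ℤ)) := by
  intro h
  rw [fm_apply, Prod.ext_iff] at h
  obtain ⟨h1, h2⟩ := h
  dsimp only at h1 h2
  omega

noncomputable def psi (K : Type*) [Field K] :
    AddMonoidAlgebra K C.Quotient →+* AddMonoidAlgebra K (ℤ × ℤ) :=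
  AddMonoidAlgebra.mapDomainRingHom K phi

lemma psi_apply (K : Type*) [Field K] (y : AddMonoidAlgebra K C.Quotient) :
    psi K y = AddMonoidAlgebra.mapDomain phi y := rfl

lemma psi_inj (K : Type*) [Field K] : Function.Injective (psi K) := by
  intro a b h
  rw [psi_apply, psi_apply] at h
  exact AddMonoidAlgebra.mapDomain_injective phi_inj h

lemma isDomainC (K : Type*) [Field K] : IsDomain (AddMonoidAlgebra K C.Quotient) := by
  haveI : IsDomain (AddMonoidAlgebra K (ℤ × ℤ)) := NoZeroDivisors.to_isDomain _
  exact Function.Injective.isDomain (psi K) (psi_inj K)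

end Stmt13Aux

namespace Stmt13Aux

lemma notIC (K : Type*) [Field K] :
    ¬ IsIntegrallyClosed (AddMonoidAlgebra K C.Quotient) := by
  intro hIC
  haveI : IsDomain (AddMonoidAlgebra K C.Quotient) := isDomainC K
  set A := AddMonoidAlgebra K C.Quotient with hA
  let F := FractionRing A
  let u24 : A := AddMonoidAlgebra.single ((X 0 1 0 1 : Fin 4 →₀ ℕ) : C.Quotient) 1
  let u3 : A := AddMonoidAlgebra.single ((X 0 0 1 0 : Fin 4 →₀ ℕ) : C.Quotient) 1
  let u23 : A := AddMonoidAlgebra.single ((X 0 1 1 0 : Fin 4 →₀ ℕ) : C.Quotient) 1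
  have h3ne : u3 ≠ 0 := fun h => one_ne_zero (AddMonoidAlgebra.single_eq_zero.mp h)
  have hinjF := IsFractionRing.injective A F
  have h3F : algebraMap A F u3 ≠ 0 := (map_ne_zero_iff _ hinjF).mpr h3ne
  set x : F := algebraMap A F u24 / algebraMap A F u3 with hx
  have hkey : u24 ^ 2 = u23 * u3 ^ 2 := by
    rw [pow_two, pow_two]
    show AddMonoidAlgebra.single _ (1:K) * AddMonoidAlgebra.single _ 1
      = AddMonoidAlgebra.single _ 1 * (AddMonoidAlgebra.single _ 1 * AddMonoidAlgebra.single _ 1)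
    rw [AddMonoidAlgebra.single_mul_single, AddMonoidAlgebra.single_mul_single,
      AddMonoidAlgebra.single_mul_single, one_mul, one_mul]
    congr 1
    rw [← AddCon.coe_add, ← AddCon.coe_add, ← AddCon.coe_add, X_add, X_add, X_add]
    exact (C.eq).mpr (fm_inj (by rw [fm_X, fm_X]; norm_num))
  have hsq : x ^ 2 = algebraMap A F u23 := by
    rw [hx, div_pow, div_eq_iff (pow_ne_zero 2 h3F), ← map_pow, ← map_pow, ← map_mul]
    exact congrArg _ hkey
  obtain ⟨y, hy⟩ := IsIntegrallyClosed.exists_algebraMap_eq_of_isIntegral_pow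
    (R := A) (K := F) (n := 2) (by norm_num) (hsq ▸ isIntegral_algebraMap)
  have hyu : y * u3 = u24 := by
    apply hinjF
    rw [map_mul, hy, hx, div_mul_cancel₀ _ h3F]
  have hpsi := congrArg (psi K) hyu
  rw [map_mul, psi_apply, psi_apply, psi_apply, AddMonoidAlgebra.mapDomain_single,
    AddMonoidAlgebra.mapDomain_single, phi_coe, phi_coe, fm_X, fm_X] at hpsi
  have hpsi2 := congrArg (· * AddMonoidAlgebra.single
    (((1 : ℤ), (-2 : ℤ)) : ℤ × ℤ) (1 : K)) hpsi
  rw [mul_assoc, AddMonoidAlgebra.single_mul_single, AddMonoidAlgebra.single_mul_single] at hpsi2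
  rw [show (1:K)*1 = 1 from one_mul 1] at hpsi2
  have e1 : ((((0:ℕ):ℤ) - 3 * (0:ℕ) - (1:ℕ), 4 * ((0:ℕ):ℤ) + 2 * (1:ℕ) + (0:ℕ)) : ℤ × ℤ)
      + ((1 : ℤ), (-2 : ℤ)) = (0 : ℤ × ℤ) := by
    rw [Prod.ext_iff]; constructor <;> norm_num
  have e2 : ((((0:ℕ):ℤ) - 3 * (1:ℕ) - (0:ℕ), 4 * ((1:ℕ):ℤ) + 2 * (0:ℕ) + (1:ℕ)) : ℤ × ℤ)
      + ((1 : ℤ), (-2 : ℤ)) = (((-2 : ℤ), (3 : ℤ)) : ℤ × ℤ) := by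
    rw [Prod.ext_iff]; constructor <;> norm_num
  rw [e1, e2, ← AddMonoidAlgebra.one_def, mul_one] at hpsi2
  have hmem : (((-2 : ℤ), (3 : ℤ)) : ℤ × ℤ) ∈ (AddMonoidAlgebra.mapDomain (⇑phi) y).coeff.support := by
    rw [hpsi2]
    simp [AddMonoidAlgebra.coeff_single, Finsupp.support_single_ne_zero]
  change _ ∈ (Finsupp.mapDomain (⇑phi) y.coeff).support at hmem
  rw [Finsupp.mapDomain_support_of_injective phi_inj] at hmem
  obtain ⟨s, _, hs⟩ := Finset.mem_image.mp hmem
  obtain ⟨xr, rfl⟩ := Quotient.exists_rep s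
  exact fm_ne xr (by rw [← phi_coe]; exact hs)

end Stmt13Aux

theorem stmt13 (K : Type*) [Field K]
    (c : AddCon (Fin 4 →₀ ℕ))
    (hc : c = addConGen (fun x y =>
      (x = Finsupp.single (0 : Fin 4) 1 + Finsupp.single 1 1 ∧
        y = Finsupp.single (2 : Fin 4) 2) ∨
      (x = Finsupp.single (0 : Fin 4) 1 + Finsupp.single 2 1 ∧
        y = Finsupp.single (3 : Fin 4) 2))) :
    IsDomain (AddMonoidAlgebra K c.Quotient) ∧
      ¬ IsIntegrallyClosed (AddMonoidAlgebra K c.Quotient) := by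
  subst hc
  exact ⟨Stmt13Aux.isDomainC K, Stmt13Aux.notIC K⟩
end
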